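/- arXiv:0707.4385 — 6 statements merged into one kernel-verified Lean document; each statement's English description precedes it below -/
import Mathlib

section
/- For any octonions a, b, c, the real part of (ab)c equals the real part of a(bc). -/
noncomputable section

def Oct : Type := Quaternion ℝ × Quaternion ℝ

namespace Oct

def fst (p : Oct) : Quaternion ℝ := Prod.fst p
def snd (p : Oct) : Quaternion ℝ := Prod.snd p

instance : NormedAddCommGroup Oct :=
  inferInstanceAs (NormedAddCommGroup (Quaternion ℝ × Quaternion ℝ))
instance : NormedSpace ℝ Oct :=
  inferInstanceAs (NormedSpace ℝ (Quaternion ℝ × Quaternion ℝ))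
instance : MeasurableSpace Oct := borel Oct

instance : One Oct := ⟨((1 : Quaternion ℝ), (0 : Quaternion ℝ))⟩

/-- Cayley–Dickson multiplication on 𝕆 = ℍ × ℍ. -/
instance : Mul Oct := ⟨fun p q =>
  (fst p * fst q - star (snd q) * snd p, snd q * fst p + snd p * star (fst q))⟩

/-- Octonionic conjugation. -/
def conj (p : Oct) : Oct := (star (fst p), -(snd p))

/-- Real part of an octonion. -/
def re (p : Oct) : ℝ := (fst p).re

/-- |p|² = Re(p p̄). -/
def normSq (p : Oct) : ℝ := re (p * conj p)

/-- Embedding of the reals into the octonions. -/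
def ofReal (r : ℝ) : Oct := ((r : Quaternion ℝ), (0 : Quaternion ℝ))

end Oct

lemma Oct.mul_def (p q : Oct) : p * q =
    ((Oct.fst p * Oct.fst q - star (Oct.snd q) * Oct.snd p : Quaternion ℝ),
     (Oct.snd q * Oct.fst p + Oct.snd p * star (Oct.fst q) : Quaternion ℝ)) := rfl

lemma Oct.fst_mul (p q : Oct) : Oct.fst (p * q) =
    Oct.fst p * Oct.fst q - star (Oct.snd q) * Oct.snd p := rfl

lemma Oct.snd_mul (p q : Oct) : Oct.snd (p * q) =
    Oct.snd q * Oct.fst p + Oct.snd p * star (Oct.fst q) := rfl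

/-- Re((ab)c) = Re(a(bc)) for all octonions. -/
theorem re_mul_assoc (a b c : Oct) :
    Oct.re ((a * b) * c) = Oct.re (a * (b * c)) := by
  simp only [Oct.re, Oct.fst_mul, Oct.snd_mul]
  simp only [Quaternion.re_mul, Quaternion.re_sub, Quaternion.re_add, Quaternion.re_star,
    Quaternion.imI_mul, Quaternion.imJ_mul, Quaternion.imK_mul,
    Quaternion.imI_sub, Quaternion.imJ_sub, Quaternion.imK_sub,
    Quaternion.imI_add, Quaternion.imJ_add, Quaternion.imK_add,
    Quaternion.imI_star, Quaternion.imJ_star, Quaternion.imK_star]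
  ring
end
end

section
/- For any octonion a and any two purely imaginary orthogonal octonions b, c (i.e., Re(b) = Re(c) = 0 and Re(bc̄) = 0), one has Re((āb)(ca)) = 0. -/
noncomputable section

namespace Oct
lemma mul_fst (p q : Oct) : fst (p * q) = fst p * fst q - star (snd q) * snd p := rfl
lemma mul_snd (p q : Oct) : snd (p * q) = snd q * fst p + snd p * star (fst q) := rfl
lemma conj_fst (p : Oct) : fst (conj p) = star (fst p) := rfl
lemma conj_snd (p : Oct) : snd (conj p) = -(snd p) := rfl
lemma fst_mk (x y : Quaternion ℝ) : fst (⟨x, y⟩ : Oct) = x := rfl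
lemma snd_mk (x y : Quaternion ℝ) : snd (⟨x, y⟩ : Oct) = y := rfl
end Oct

/-- If b, c are purely imaginary and orthogonal then Re((āb)(ca)) = 0. -/
theorem re_conj_mul_orthogonal (a b c : Oct)
    (hb : Oct.re b = 0) (hc : Oct.re c = 0)
    (hbc : Oct.re (b * Oct.conj c) = 0) :
    Oct.re ((Oct.conj a * b) * (c * a)) = 0 := by
  simp only [Oct.re, Oct.mul_fst, Oct.mul_snd, Oct.conj_fst, Oct.conj_snd] at *
  obtain ⟨a1, a2⟩ := a
  obtain ⟨b1, b2⟩ := b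
  obtain ⟨c1, c2⟩ := c
  simp only [Oct.fst_mk, Oct.snd_mk] at *
  simp only [Quaternion.re_mul, Quaternion.imI_mul, Quaternion.imJ_mul, Quaternion.imK_mul,
    Quaternion.re_sub, Quaternion.imI_sub, Quaternion.imJ_sub, Quaternion.imK_sub,
    Quaternion.re_add, Quaternion.imI_add, Quaternion.imJ_add, Quaternion.imK_add,
    Quaternion.re_star, Quaternion.imI_star, Quaternion.imJ_star,
    Quaternion.imK_star, Quaternion.re_neg, Quaternion.imI_neg, Quaternion.imJ_neg,
    Quaternion.imK_neg] at *
  obtain ⟨aw,ax,ay,az⟩ := a1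
  obtain ⟨ew,ex,ey,ez⟩ := a2
  obtain ⟨bw,bx,by2,bz⟩ := b1
  obtain ⟨fw,fx,fy,fz⟩ := b2
  obtain ⟨cw,cx,cy,cz⟩ := c1
  obtain ⟨gw,gx,gy,gz⟩ := c2
  dsimp only at *
  linear_combination (-(aw^2+ax^2+ay^2+az^2+ew^2+ex^2+ey^2+ez^2)) * hbc +
    (2*(aw^2+ax^2+ay^2+az^2+ew^2+ex^2+ey^2+ez^2)*cw) * hb
end
end

section
/- An octonionic hermitian 2×2 matrix A = [[a, q],[q̄, b]] with a, b real and q an octonion is positive definite (i.e., Re(ξ* A ξ) > 0 for every nonzero column ξ ∈ 𝕆²) if and only if a > 0 and det A := ab − |q|² > 0. -/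
noncomputable section

namespace OctAux

open Oct

lemma mul_def (p q : Oct) :
    p * q = (p.1 * q.1 - star q.2 * p.2, q.2 * p.1 + p.2 * star q.1) := rfl

lemma conj_def (p : Oct) : Oct.conj p = (star p.1, -p.2) := rfl

lemma zero_def : (0 : Oct) = ((0 : Quaternion ℝ), (0 : Quaternion ℝ)) := rfl

lemma one_def : (1 : Oct) = ((1 : Quaternion ℝ), (0 : Quaternion ℝ)) := rfl

lemma smul_def (r : ℝ) (p : Oct) : r • p = (r • p.1, r • p.2) := rfl

lemma add_def (p q : Oct) : p + q = (p.1 + q.1, p.2 + q.2) := rfl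

lemma normSq_eq (p : Oct) :
    Oct.normSq p = Quaternion.normSq p.1 + Quaternion.normSq p.2 := by
  simp only [Oct.normSq, Oct.re, Oct.fst, Quaternion.normSq_def']
  rw [mul_def, conj_def]
  simp [Quaternion.re_mul, Quaternion.re_sub]
  ring

lemma normSq_nonneg (p : Oct) : 0 ≤ Oct.normSq p := by
  rw [normSq_eq]
  exact add_nonneg (Quaternion.normSq_nonneg) (Quaternion.normSq_nonneg)

lemma normSq_eq_zero {p : Oct} : Oct.normSq p = 0 ↔ p = 0 := by
  rw [normSq_eq]
  constructor
  · intro h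
    have h1 : Quaternion.normSq p.1 = 0 := by
      nlinarith [Quaternion.normSq_nonneg (a := p.1), Quaternion.normSq_nonneg (a := p.2)]
    have h2 : Quaternion.normSq p.2 = 0 := by linarith
    rw [Quaternion.normSq_eq_zero] at h1 h2
    exact Prod.ext h1 h2
  · intro h; rw [h, zero_def]; simp

lemma normSq_pos {p : Oct} (h : p ≠ 0) : 0 < Oct.normSq p :=
  lt_of_le_of_ne (normSq_nonneg p) (fun hc => h (normSq_eq_zero.mp hc.symm))

lemma normSq_one : Oct.normSq (1 : Oct) = 1 := by
  rw [normSq_eq, one_def]; simp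

lemma mul_zero' (p : Oct) : p * 0 = 0 := by
  rw [mul_def, zero_def]; simp; rfl

lemma zero_mul' (p : Oct) : (0 : Oct) * p = 0 := by
  rw [mul_def, zero_def]; simp; rfl

lemma mul_one' (p : Oct) : p * 1 = p := by
  rw [mul_def, one_def]; simp; rfl

lemma re_zero : Oct.re (0 : Oct) = 0 := rfl

/-- Key completion-of-square identity:
`a⬝Q(x,y) = |a•x + q y|² + (ab − |q|²)|y|²`. -/
lemma key (a b : ℝ) (q x y : Oct) :
    a * (a * Oct.normSq x + b * Oct.normSq y +
        2 * Oct.re (q * (y * Oct.conj x))) =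
      Oct.normSq (a • x + q * y) + (a * b - Oct.normSq q) * Oct.normSq y := by
  simp only [normSq_eq, Oct.re, Oct.fst, Quaternion.normSq_def']
  rw [add_def, smul_def, mul_def q, mul_def y, mul_def q, conj_def]
  simp only [Quaternion.re_mul, Quaternion.imI_mul, Quaternion.imJ_mul, Quaternion.imK_mul,
    Quaternion.re_add, Quaternion.imI_add, Quaternion.imJ_add, Quaternion.imK_add,
    Quaternion.re_sub, Quaternion.imI_sub, Quaternion.imJ_sub, Quaternion.imK_sub,
    Quaternion.re_neg, Quaternion.imI_neg, Quaternion.imJ_neg, Quaternion.imK_neg,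
    Quaternion.re_star, Quaternion.imI_star, Quaternion.imJ_star, Quaternion.imK_star,
    Quaternion.re_smul, Quaternion.imI_smul, Quaternion.imJ_smul, Quaternion.imK_smul,
    smul_eq_mul]
  ring

end OctAux

/-- Sylvester criterion: A = [[a,q],[q̄,b]] is positive definite iff a > 0 and det A > 0. -/
theorem sylvester_criterion (a b : ℝ) (q : Oct) :
    (∀ ξ : Oct × Oct, ξ ≠ 0 →
        0 < a * Oct.normSq ξ.1 + b * Oct.normSq ξ.2 +
            2 * Oct.re (q * (ξ.2 * Oct.conj ξ.1))) ↔
      (0 < a ∧ 0 < a * b - Oct.normSq q) := by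
  open OctAux in
  constructor
  · intro h
    have hone : ((1 : Oct), (0 : Oct)) ≠ (0 : Oct × Oct) := by
      intro hc
      have : (1 : Oct) = 0 := congrArg Prod.fst hc
      rw [one_def, zero_def] at this
      exact one_ne_zero (congrArg Prod.fst this)
    have ha : 0 < a := by
      have := h ((1 : Oct), (0 : Oct)) hone
      simpa [normSq_one, normSq_eq_zero.mpr rfl, zero_mul', mul_zero', re_zero] using this
    refine ⟨ha, ?_⟩
    -- choose ξ = ((-a⁻¹) • q, 1)
    have hne : (((-a⁻¹) • q : Oct), (1 : Oct)) ≠ (0 : Oct × Oct) := by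
      intro hc
      have : (1 : Oct) = 0 := congrArg Prod.snd hc
      rw [one_def, zero_def] at this
      exact one_ne_zero (congrArg Prod.fst this)
    have hQ := h (((-a⁻¹) • q : Oct), (1 : Oct)) hne
    have hk := OctAux.key a b q ((-a⁻¹) • q) 1
    have hcancel : a • ((-a⁻¹) • q) + q * 1 = 0 := by
      rw [mul_one', smul_smul]
      have : a * -a⁻¹ = -1 := by
        field_simp
      rw [this, neg_one_smul, neg_add_cancel]
    rw [hcancel, normSq_eq_zero.mpr rfl, normSq_one] at hk
    simp only [mul_one, zero_add] at hk
    have hQ' : 0 < a * Oct.normSq ((-a⁻¹) • q) + b +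
        2 * Oct.re (q * ((1 : Oct) * Oct.conj ((-a⁻¹) • q))) := by
      simpa [normSq_one] using hQ
    have := mul_pos ha hQ'
    linarith [hk]
  · rintro ⟨ha, hdet⟩ ξ hξ
    have hk := OctAux.key a b q ξ.1 ξ.2
    by_cases hy : ξ.2 = 0
    · have hx : ξ.1 ≠ 0 := by
        intro hc; exact hξ (Prod.ext hc hy)
      have h1 : 0 < Oct.normSq ξ.1 := normSq_pos hx
      have h2 : Oct.normSq ξ.2 = 0 := normSq_eq_zero.mpr hy
      have h3 : ξ.2 * Oct.conj ξ.1 = 0 := by rw [hy, zero_mul']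
      rw [h2, h3, mul_zero', re_zero]
      nlinarith
    · have h1 : 0 < Oct.normSq ξ.2 := normSq_pos hy
      have h2 : 0 ≤ Oct.normSq (a • ξ.1 + q * ξ.2) := normSq_nonneg _
      nlinarith [hk]
end
end

section
/- If A = [[a₁₁, a₁₂],[ā₁₂, a₂₂]] and B = [[b₁₁, b₁₂],[b̄₁₂, b₂₂]] are positive definite octonionic hermitian 2×2 matrices, then the mixed determinant det(A,B) := ½(a₁₁b₂₂ + a₂₂b₁₁ − 2Re(a₁₂ b̄₁₂)) is strictly positive. -/
noncomputable section

/-- The mixed determinant of two positive definite octonionic hermitian matrices is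
positive.  (Positive definiteness is expressed by the Sylvester criterion.) -/
theorem mixedDet_pos (a11 a22 b11 b22 : ℝ) (a12 b12 : Oct)
    (hA1 : 0 < a11) (hA2 : 0 < a11 * a22 - Oct.normSq a12)
    (hB1 : 0 < b11) (hB2 : 0 < b11 * b22 - Oct.normSq b12) :
    0 < (a11 * b22 + a22 * b11 - 2 * Oct.re (a12 * Oct.conj b12)) / 2 := by

  -- unfold the octonionic quantities into quaternion data
  have hre : Oct.re (a12 * Oct.conj b12) =
      (a12.1 * star b12.1).re + (a12.2 * star b12.2).re := by
    show (a12.1 * star b12.1 - star (-(b12.2)) * a12.2).re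
        = (a12.1 * star b12.1).re + (a12.2 * star b12.2).re
    simp [Quaternion.re_mul, Quaternion.re_sub]
    ring
  have hnsA : Oct.normSq a12 = ‖a12.1‖ * ‖a12.1‖ + ‖a12.2‖ * ‖a12.2‖ := by
    show (a12.1 * star a12.1 - star (-(a12.2)) * a12.2).re = _
    simp [Quaternion.re_mul, Quaternion.re_sub, ← Quaternion.normSq_eq_norm_mul_self,
      Quaternion.normSq_def']
    ring
  have hnsB : Oct.normSq b12 = ‖b12.1‖ * ‖b12.1‖ + ‖b12.2‖ * ‖b12.2‖ := by
    show (b12.1 * star b12.1 - star (-(b12.2)) * b12.2).re = _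
    simp [Quaternion.re_mul, Quaternion.re_sub, ← Quaternion.normSq_eq_norm_mul_self,
      Quaternion.normSq_def']
    ring
  have h1 : (a12.1 * star b12.1).re ≤ ‖a12.1‖ * ‖b12.1‖ := by
    simpa [Quaternion.inner_def] using real_inner_le_norm a12.1 b12.1
  have h2 : (a12.2 * star b12.2).re ≤ ‖a12.2‖ * ‖b12.2‖ := by
    simpa [Quaternion.inner_def] using real_inner_le_norm a12.2 b12.2
  rw [hnsA] at hA2
  rw [hnsB] at hB2
  rw [hre]
  have nA1 := norm_nonneg a12.1
  have nA2 := norm_nonneg a12.2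
  have nB1 := norm_nonneg b12.1
  have nB2 := norm_nonneg b12.2
  have ha22 : 0 < a22 := by nlinarith
  have hb22 : 0 < b22 := by nlinarith
  have key : (‖a12.1‖ * ‖b12.1‖ + ‖a12.2‖ * ‖b12.2‖) * 2 < a11 * b22 + a22 * b11 := by
    nlinarith [sq_nonneg (‖a12.1‖ * ‖b12.2‖ - ‖a12.2‖ * ‖b12.1‖),
      sq_nonneg (a11 * b22 - a22 * b11),
      mul_pos (mul_pos hA1 ha22) (mul_pos hB1 hb22),
      mul_pos hA1 hb22, mul_pos ha22 hB1,
      mul_nonneg (mul_nonneg nA1 nB1) (mul_nonneg nA2 nB2)]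
  linarith
end
end

section
/- If A is a positive definite octonionic hermitian 2×2 matrix, then for any octonionic hermitian 2×2 matrix B the Aleksandrov inequality det(A,B)² ≥ det(A)·det(B) holds, with equality if and only if B is a real scalar multiple of A. -/
noncomputable section

/-- The determinant of an octonionic hermitian 2×2 matrix, encoded as (a, b, q) ∈ ℝ × ℝ × 𝕆. -/
def hermDet (A : ℝ × ℝ × Oct) : ℝ := A.1 * A.2.1 - Oct.normSq A.2.2

/-- The mixed determinant: the symmetric bilinear polarization of `hermDet`. -/
def mixedDet (A B : ℝ × ℝ × Oct) : ℝ :=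
  (A.1 * B.2.1 + B.1 * A.2.1 - 2 * Oct.re (A.2.2 * Oct.conj B.2.2)) / 2

def ip (p q : Oct) : ℝ := Oct.re (p * Oct.conj q)

lemma ip_eq (p q : Oct) : ip p q =
    (inner ℝ (Oct.fst p) (Oct.fst q) : ℝ) + (inner ℝ (Oct.snd p) (Oct.snd q) : ℝ) := by
  change (Oct.fst p * star (Oct.fst q) - star (-(Oct.snd q)) * Oct.snd p).re = _
  simp [Quaternion.inner_def, Quaternion.re_mul]; ring

lemma ip_self (p : Oct) : ip p p = Oct.normSq p := rfl

lemma normSq_nonneg (p : Oct) : 0 ≤ Oct.normSq p := by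
  rw [← ip_self, ip_eq]
  exact add_nonneg real_inner_self_nonneg real_inner_self_nonneg

lemma normSq_eq_zero {p : Oct} (h : Oct.normSq p = 0) : p = 0 := by
  rw [← ip_self, ip_eq] at h
  have h1 : (inner ℝ (Oct.fst p) (Oct.fst p) : ℝ) = 0 ∧ (inner ℝ (Oct.snd p) (Oct.snd p) : ℝ) = 0 := by
    constructor <;> nlinarith [real_inner_self_nonneg (x := Oct.fst p),
      real_inner_self_nonneg (x := Oct.snd p)]
  have e1 : Oct.fst p = 0 := inner_self_eq_zero.mp h1.1
  have e2 : Oct.snd p = 0 := inner_self_eq_zero.mp h1.2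
  show ((Oct.fst p, Oct.snd p) : Quaternion ℝ × Quaternion ℝ) = 0
  rw [e1, e2]; rfl

lemma ip_sub_right (p q r : Oct) : ip p (q - r) = ip p q - ip p r := by
  have h1 : Oct.fst (q - r) = Oct.fst q - Oct.fst r := rfl
  have h2 : Oct.snd (q - r) = Oct.snd q - Oct.snd r := rfl
  simp [ip_eq, h1, h2, inner_sub_right]; ring

lemma ip_smul_right (t : ℝ) (p q : Oct) : ip p (t • q) = t * ip p q := by
  have h1 : Oct.fst (t • q) = t • Oct.fst q := rfl
  have h2 : Oct.snd (t • q) = t • Oct.snd q := rfl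
  simp [ip_eq, h1, h2, real_inner_smul_right]; ring

lemma ip_comm (p q : Oct) : ip p q = ip q p := by
  simp [ip_eq, real_inner_comm]

lemma ip_cs (p q : Oct) : ip p q ^ 2 ≤ Oct.normSq p * Oct.normSq q := by
  rw [← ip_self, ← ip_self, ip_eq, ip_eq, ip_eq]
  set s1 : ℝ := inner ℝ (Oct.fst p) (Oct.fst q)
  set s2 : ℝ := inner ℝ (Oct.snd p) (Oct.snd q)
  have c1 := real_inner_mul_inner_self_le (Oct.fst p) (Oct.fst q)
  have c2 := real_inner_mul_inner_self_le (Oct.snd p) (Oct.snd q)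
  have n1 := abs_real_inner_le_norm (Oct.fst p) (Oct.fst q)
  have n2 := abs_real_inner_le_norm (Oct.snd p) (Oct.snd q)
  have e1 : (inner ℝ (Oct.fst p) (Oct.fst p) : ℝ) = ‖Oct.fst p‖ ^ 2 := real_inner_self_eq_norm_sq _
  have e2 : (inner ℝ (Oct.snd p) (Oct.snd p) : ℝ) = ‖Oct.snd p‖ ^ 2 := real_inner_self_eq_norm_sq _
  have e3 : (inner ℝ (Oct.fst q) (Oct.fst q) : ℝ) = ‖Oct.fst q‖ ^ 2 := real_inner_self_eq_norm_sq _
  have e4 : (inner ℝ (Oct.snd q) (Oct.snd q) : ℝ) = ‖Oct.snd q‖ ^ 2 := real_inner_self_eq_norm_sq _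
  rw [e1, e2, e3, e4]
  have a1 := abs_le.mp n1
  have a2 := abs_le.mp n2
  nlinarith [sq_nonneg (‖Oct.fst p‖ * ‖Oct.snd q‖ - ‖Oct.snd p‖ * ‖Oct.fst q‖),
    mul_nonneg (sub_nonneg.mpr a1.2) (sub_nonneg.mpr a2.2),
    mul_nonneg (by linarith [a1.1] : (0:ℝ) ≤ ‖Oct.fst p‖ * ‖Oct.fst q‖ + s1)
      (by linarith [a2.1] : (0:ℝ) ≤ ‖Oct.snd p‖ * ‖Oct.snd q‖ + s2)]

/-- Scalar orthogonality lemma. -/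
lemma ortho (a c b' d' P Q' S' : ℝ) (ha : 0 < a) (hA : 0 < a * c - P)
    (hP : 0 ≤ P) (hQ' : 0 ≤ Q') (hCS : S' ^ 2 ≤ P * Q')
    (horth : a * d' + b' * c - 2 * S' = 0) :
    b' * d' - Q' ≤ 0 ∧ (b' * d' - Q' = 0 → b' = 0 ∧ d' = 0 ∧ Q' = 0) := by
  have hc : 0 < c := by nlinarith
  have hS : a * d' + b' * c = 2 * S' := by linarith
  have h4 : (a * d' + b' * c) ^ 2 = 4 * S' ^ 2 := by rw [hS]; ring
  constructor
  · nlinarith [sq_nonneg (a * d' - b' * c), h4, hCS, mul_nonneg hA.le hQ',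
      mul_pos ha hc]
  · intro heq
    have hQ0 : Q' = 0 := by
      rcases eq_or_lt_of_le hQ' with h | h
      · exact h.symm
      · exfalso; nlinarith [sq_nonneg (a * d' - b' * c), h4, hCS, mul_pos hA h]
    have hS0 : S' = 0 := by nlinarith [sq_nonneg S']
    have hbd : b' * d' = 0 := by rw [hQ0] at heq; linarith
    rcases mul_eq_zero.mp hbd with h | h
    · have hd : d' = 0 := by
        have had : a * d' = 0 := by rw [h] at horth; linarith
        rcases mul_eq_zero.mp had with h' | h'
        · exact absurd h' ha.ne'
        · exact h'
      exact ⟨h, hd, hQ0⟩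
    · have hb : b' = 0 := by
        have hbc : b' * c = 0 := by rw [h] at horth; linarith
        rcases mul_eq_zero.mp hbc with h' | h'
        · exact h'
        · exact absurd h' hc.ne'
      exact ⟨hb, h, hQ0⟩

lemma ip_expand_lin (t : ℝ) (p q : Oct) :
    ip p (q - t • p) = ip p q - t * Oct.normSq p := by
  rw [ip_sub_right, ip_smul_right, ip_self]

lemma ip_expand (t : ℝ) (p q : Oct) :
    Oct.normSq (q - t • p) = Oct.normSq q - 2 * t * ip p q + t ^ 2 * Oct.normSq p := by
  rw [← ip_self, ip_sub_right, ip_smul_right, ip_comm _ q, ip_comm _ p, ip_sub_right,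
    ip_smul_right, ip_sub_right, ip_smul_right, ip_self, ip_self, ip_comm q p]
  ring

lemma normSq_smul (s : ℝ) (p : Oct) : Oct.normSq (s • p) = s ^ 2 * Oct.normSq p := by
  rw [← ip_self, ip_smul_right, ip_comm, ip_smul_right, ip_self]; ring

/-- Aleksandrov inequality: if A is positive definite then det(A,B)² ≥ det A · det B,
with equality iff B is a real multiple of A. -/
theorem aleksandrov_inequality (A B : ℝ × ℝ × Oct)
    (hA1 : 0 < A.1) (hA2 : 0 < hermDet A) :
    mixedDet A B ^ 2 ≥ hermDet A * hermDet B ∧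
      (mixedDet A B ^ 2 = hermDet A * hermDet B ↔ ∃ t : ℝ, B = t • A) := by
  obtain ⟨a, c, p⟩ := A
  obtain ⟨b, d, q⟩ := B
  simp only [hermDet, mixedDet] at *
  have hip : Oct.re (p * Oct.conj q) = ip p q := rfl
  rw [hip] at *
  set hd : ℝ := a * c - Oct.normSq p with hhd
  set m : ℝ := (a * d + b * c - 2 * ip p q) / 2 with hm
  set t : ℝ := m / hd with ht
  have hthd : t * hd = m := div_mul_cancel₀ m hA2.ne'
  set b' : ℝ := b - t * a with hb'
  set d' : ℝ := d - t * c with hd'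
  set q' : Oct := q - t • p with hq'
  have hS' : ip p q' = ip p q - t * Oct.normSq p := ip_expand_lin t p q
  have hQ' : Oct.normSq q' = Oct.normSq q - 2 * t * ip p q + t ^ 2 * Oct.normSq p :=
    ip_expand t p q
  have horth : a * d' + b' * c - 2 * ip p q' = 0 := by
    rw [hS', hb', hd']
    have : a * (d - t * c) + (b - t * a) * c - 2 * (ip p q - t * Oct.normSq p)
        = 2 * m - 2 * (t * hd) := by rw [hm, hhd]; ring
    rw [this, hthd]; ring
  obtain ⟨hE, hEeq⟩ := ortho a c b' d' (Oct.normSq p) (Oct.normSq q') (ip p q') hA1 hA2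
    (normSq_nonneg p) (normSq_nonneg q') (ip_cs p q') horth
  have hid : b * d - Oct.normSq q = t ^ 2 * hd + (b' * d' - Oct.normSq q') := by
    rw [hQ', hb', hd']
    have h2 : t * (2 * (t * hd) - 2 * m) = 0 := by rw [hthd]; ring
    linear_combination -h2 + t ^ 2 * hhd
  have hmt : m = t * hd := hthd.symm
  have key : hd * (b * d - Oct.normSq q) = m ^ 2 + hd * (b' * d' - Oct.normSq q') := by
    rw [hid]; linear_combination (-(t * hd) - m) * hmt
  constructor
  · rw [ge_iff_le, key]
    linarith [mul_nonpos_of_nonneg_of_nonpos hA2.le hE]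
  · constructor
    · intro heq
      rw [key] at heq
      have hE0 : b' * d' - Oct.normSq q' = 0 := by
        have h0 : hd * (b' * d' - Oct.normSq q') = 0 := by linarith
        exact (mul_eq_zero.mp h0).resolve_left hA2.ne'
      obtain ⟨hb0, hd0, hq0⟩ := hEeq hE0
      refine ⟨t, ?_⟩
      have hqq : q = t • p := by
        have h0 : q' = 0 := normSq_eq_zero hq0
        rw [hq'] at h0; exact sub_eq_zero.mp h0
      have hbb : b = t * a := by rw [hb'] at hb0; linarith
      have hdd : d = t * c := by rw [hd'] at hd0; linarith
      have hsm : t • ((a, c, p) : ℝ × ℝ × Oct) = (t * a, t * c, t • p) := rfl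
      rw [hsm, hbb, hdd, hqq]
    · rintro ⟨s, hB⟩
      have hsm : s • ((a, c, p) : ℝ × ℝ × Oct) = (s * a, s * c, s • p) := rfl
      rw [hsm] at hB
      have h1 : b = s * a := congrArg Prod.fst hB
      have h2 : d = s * c := congrArg (fun x => x.2.1) hB
      have h3 : q = s • p := congrArg (fun x => x.2.2) hB
      subst h1 h2 h3
      have hmval : m = s * hd := by rw [hm, hhd, ip_smul_right, ip_self]; ring
      have hdet : s * a * (s * c) - Oct.normSq (s • p) = s ^ 2 * hd := by
        rw [normSq_smul, hhd]; ring
      rw [hdet, hmval]; ring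
end
end

section
/- The octonionic projective line equivalence: for unit vectors ξ = (x,y) ∈ 𝕆² with y ≠ 0, one has ξξ* = ηη* where η is the normalization of (x y⁻¹, 1); in particular ξξ* determines and is determined by the element x y⁻¹ ∈ 𝕆 (together with the norm condition). -/
noncomputable section

/-- The inverse of an octonion: q⁻¹ = q̄ / |q|². -/
def Oct.inv (p : Oct) : Oct := (Oct.normSq p)⁻¹ • Oct.conj p

namespace Oct

theorem mul_def' (p q : Oct) :
    p * q = (p.1 * q.1 - star q.2 * p.2, q.2 * p.1 + p.2 * star q.1) := rfl

theorem smul_def' (r : ℝ) (p : Oct) : r • p = (r • p.1, r • p.2) := rfl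

theorem conj_def' (p : Oct) : conj p = (star p.1, -p.2) := rfl

theorem one_def' : (1 : Oct) = ((1 : Quaternion ℝ), (0 : Quaternion ℝ)) := rfl

theorem normSq_eq' (p : Oct) :
    normSq p = Quaternion.normSq p.1 + Quaternion.normSq p.2 := by
  show ((p * conj p).1).re = _
  rw [mul_def', conj_def']
  simp [Quaternion.self_mul_star, Quaternion.star_mul_self, sub_neg_eq_add]

theorem conj_conj' (p : Oct) : conj (conj p) = p := by
  exact Prod.ext (star_star _) (neg_neg _)

theorem conj_one' : conj (1 : Oct) = 1 := by
  exact Prod.ext (star_one (Quaternion ℝ)) neg_zero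

theorem conj_smul' (r : ℝ) (p : Oct) : conj (r • p) = r • conj p := by
  refine Prod.ext ?_ ?_
  · show star (r • p.1) = r • star p.1
    simp
  · show -(r • p.2) = r • -p.2
    simp

theorem mul_one' (p : Oct) : p * 1 = p := by
  refine Prod.ext ?_ ?_
  · show p.1 * 1 - star (0 : Quaternion ℝ) * p.2 = p.1
    simp
  · show (0 : Quaternion ℝ) * p.1 + p.2 * star 1 = p.2
    simp

theorem one_mul' (p : Oct) : (1 : Oct) * p = p := by
  refine Prod.ext ?_ ?_
  · show 1 * p.1 - star p.2 * (0 : Quaternion ℝ) = p.1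
    simp
  · show p.2 * 1 + (0 : Quaternion ℝ) * star p.1 = p.2
    simp

theorem smul_mul' (r : ℝ) (p q : Oct) : (r • p) * q = r • (p * q) := by
  simp only [mul_def', smul_def']
  refine Prod.ext ?_ ?_
  · show (r • p.1) * q.1 - star q.2 * (r • p.2) = r • (p.1 * q.1 - star q.2 * p.2)
    simp [smul_sub, smul_add, smul_mul_assoc, mul_smul_comm]
  · show q.2 * (r • p.1) + (r • p.2) * star q.1 = r • (q.2 * p.1 + p.2 * star q.1)
    simp [smul_sub, smul_add, smul_mul_assoc, mul_smul_comm]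

theorem mul_smul' (r : ℝ) (p q : Oct) : p * (r • q) = r • (p * q) := by
  simp only [mul_def', smul_def', star_smul, star_trivial]
  refine Prod.ext ?_ ?_
  · show p.1 * (r • q.1) - star (r • q.2) * p.2 = r • (p.1 * q.1 - star q.2 * p.2)
    simp [smul_sub, smul_add, smul_mul_assoc, mul_smul_comm, star_smul]
  · show (r • q.2) * p.1 + p.2 * star (r • q.1) = r • (q.2 * p.1 + p.2 * star q.1)
    simp [smul_sub, smul_add, smul_mul_assoc, mul_smul_comm, star_smul]

theorem conj_mul' (p q : Oct) : conj (p * q) = conj q * conj p := by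
  simp only [conj_def', mul_def']
  refine Prod.ext ?_ ?_
  · show star (p.1 * q.1 - star q.2 * p.2) = star q.1 * star p.1 - star (-p.2) * (-q.2)
    simp [star_sub, star_mul, mul_comm]
  · 
    show -(q.2 * p.1 + p.2 * star q.1) = -p.2 * star q.1 + -q.2 * star (star p.1)
    rw [star_star]
    rw [neg_add, neg_mul, neg_mul]
    exact add_comm _ _

theorem mul_conj_self' (p : Oct) : p * conj p = ofReal (normSq p) := by
  rw [mul_def', conj_def', normSq_eq', ofReal]
  refine Prod.ext ?_ ?_
  · simp [Quaternion.self_mul_star, Quaternion.star_mul_self, sub_neg_eq_add,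
      Quaternion.coe_add]
  · simp

theorem normSq_mul' (p q : Oct) : normSq (p * q) = normSq p * normSq q := by
  rw [normSq_eq', normSq_eq', normSq_eq', mul_def']
  show Quaternion.normSq (p.1*q.1 - star q.2 * p.2) + Quaternion.normSq (q.2*p.1 + p.2*star q.1)
      = _
  simp only [Quaternion.normSq_def', Quaternion.re_mul, Quaternion.imI_mul, Quaternion.imJ_mul,
    Quaternion.imK_mul, Quaternion.re_sub, Quaternion.imI_sub, Quaternion.imJ_sub,
    Quaternion.imK_sub, Quaternion.re_add, Quaternion.imI_add, Quaternion.imJ_add,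
    Quaternion.imK_add, Quaternion.re_star, Quaternion.imI_star, Quaternion.imJ_star,
    Quaternion.imK_star]
  ring

theorem normSq_conj' (p : Oct) : normSq (conj p) = normSq p := by
  rw [normSq_eq', normSq_eq']
  simp [conj_def']

theorem normSq_smul' (r : ℝ) (p : Oct) : normSq (r • p) = r^2 * normSq p := by
  rw [normSq_eq', normSq_eq']
  simp [smul_def', Quaternion.normSq_def', Quaternion.re_smul,
    Quaternion.imI_smul, Quaternion.imJ_smul, Quaternion.imK_smul, smul_eq_mul]
  ring

theorem normSq_pos' (p : Oct) (hp : p ≠ 0) : 0 < normSq p := by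
  rw [normSq_eq']
  have h : p.1 ≠ 0 ∨ p.2 ≠ 0 := by
    by_contra h
    push_neg at h
    exact hp (Prod.ext h.1 h.2)
  have h1 := Quaternion.normSq_nonneg (a := p.1)
  have h2 := Quaternion.normSq_nonneg (a := p.2)
  rcases h with h | h
  · have := lt_of_le_of_ne h1 (Ne.symm (Quaternion.normSq_ne_zero.mpr h))
    linarith
  · have := lt_of_le_of_ne h2 (Ne.symm (Quaternion.normSq_ne_zero.mpr h))
    linarith

theorem smul_ofReal' (r t : ℝ) : r • ofReal t = ofReal (r * t) := by
  refine Prod.ext ?_ ?_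
  · show r • (t : Quaternion ℝ) = ((r * t : ℝ) : Quaternion ℝ)
    simp [Quaternion.smul_coe]
  · show r • (0 : Quaternion ℝ) = 0
    simp

theorem ofReal_eq_smul_one' (r : ℝ) : ofReal r = r • (1 : Oct) := by
  refine Prod.ext ?_ (by show (0 : Quaternion ℝ) = r • 0; simp)
  show ((r : ℝ) : Quaternion ℝ) = r • (1 : Quaternion ℝ)
  rw [← Quaternion.coe_one, Quaternion.smul_coe, mul_one]

end Oct

set_option maxHeartbeats 1000000 in
/-- For a unit vector ξ = (x,y) ∈ 𝕆² with y ≠ 0, one has ξξ* = ηη* where η is the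
normalization of (x y⁻¹, 1); the four entries of the 2×2 matrices agree. -/
theorem proj_line_equivalence (x y : Oct)
    (hunit : Oct.normSq x + Oct.normSq y = 1) (hy : y ≠ 0) :
    x * Oct.conj x =
        ((Real.sqrt (Oct.normSq (x * Oct.inv y) + 1))⁻¹ • (x * Oct.inv y)) *
          Oct.conj ((Real.sqrt (Oct.normSq (x * Oct.inv y) + 1))⁻¹ • (x * Oct.inv y)) ∧
    x * Oct.conj y =
        ((Real.sqrt (Oct.normSq (x * Oct.inv y) + 1))⁻¹ • (x * Oct.inv y)) *
          Oct.conj ((Real.sqrt (Oct.normSq (x * Oct.inv y) + 1))⁻¹ • (1 : Oct)) ∧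
    y * Oct.conj x =
        ((Real.sqrt (Oct.normSq (x * Oct.inv y) + 1))⁻¹ • (1 : Oct)) *
          Oct.conj ((Real.sqrt (Oct.normSq (x * Oct.inv y) + 1))⁻¹ • (x * Oct.inv y)) ∧
    y * Oct.conj y =
        ((Real.sqrt (Oct.normSq (x * Oct.inv y) + 1))⁻¹ • (1 : Oct)) *
          Oct.conj ((Real.sqrt (Oct.normSq (x * Oct.inv y) + 1))⁻¹ • (1 : Oct)) := by
  have hn : 0 < Oct.normSq y := Oct.normSq_pos' y hy
  set n : ℝ := Oct.normSq y with hn_def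
  have hxy : x * Oct.inv y = n⁻¹ • (x * Oct.conj y) := by
    rw [Oct.inv, Oct.mul_smul']
  have hns : Oct.normSq (x * Oct.inv y) = Oct.normSq x * n⁻¹ := by
    rw [hxy, Oct.normSq_smul', Oct.normSq_mul', Oct.normSq_conj']
    field_simp
    ring
  have hsq : Oct.normSq (x * Oct.inv y) + 1 = n⁻¹ := by
    rw [hns]
    field_simp
    linarith
  have hsqrt : (Real.sqrt (Oct.normSq (x * Oct.inv y) + 1))⁻¹ = Real.sqrt n := by
    rw [hsq, Real.sqrt_inv, inv_inv]
  rw [hsqrt]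
  set s : ℝ := Real.sqrt n with hs_def
  have hss : s * s = n := Real.mul_self_sqrt hn.le
  have key : ∀ p q : Oct, (s • p) * Oct.conj (s • q) = n • (p * Oct.conj q) := by
    intro p q
    rw [Oct.conj_smul', Oct.smul_mul', Oct.mul_smul', smul_smul, hss]
  refine ⟨?_, ?_, ?_, ?_⟩
  · rw [key, Oct.mul_conj_self', Oct.mul_conj_self', hns, Oct.smul_ofReal']
    congr 1
    field_simp
  · rw [key, Oct.conj_one', Oct.mul_one', hxy, smul_smul,
      mul_inv_cancel₀ hn.ne', one_smul]
  · rw [key, Oct.one_mul', hxy, Oct.conj_smul', smul_smul,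
      mul_inv_cancel₀ hn.ne', one_smul, Oct.conj_mul', Oct.conj_conj']
  · rw [key, Oct.conj_one', Oct.mul_one', Oct.mul_conj_self', ← hn_def,
      Oct.ofReal_eq_smul_one']
end
end
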